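/- Let n, m be positive natural numbers, T > 0, and k > 0. Let A, A⁻, P' : [0,T] → M_{n×n}(ℝ) with |P'(t)|_F ≤ ‖P'‖_∞ for all t, let f : [0,T] × ℝⁿ → ℝⁿ and g : [0,T] × ℝⁿ → M_{n×m}(ℝ), and suppose the monotone condition holds: for all t ∈ [0,T] and X ∈ ℝⁿ, ⟨A⁻(t)·A(t)·X, A⁻(t)·f(t,X)⟩ + (1/2)·|A⁻(t)·g(t,X)|²_F ≤ k·(1 + ‖X‖²). Let v̂ : [0,T] × ℝⁿ → ℝⁿ be Lipschitz in its second variable with constant L_v ≥ 0 (uniformly in t), with sup_{t∈[0,T]} ‖v̂(t,0)‖ finite, and suppose that for all t ∈ [0,T] and u ∈ ℝⁿ, A⁻(t)·A(t)·(u + v̂(t,u)) = u. Define f̂(t,u) = P'(t)·(u + v̂(t,u)) + A⁻(t)·f(t, u + v̂(t,u)) and ĝ(t,u) = A⁻(t)·g(t, u + v̂(t,u)). Then there exists a constant k₁ > 0 (depending only on k, L_v, ‖P'‖_∞ and sup_{t∈[0,T]} ‖v̂(t,0)‖) such that for all t ∈ [0,T] and u ∈ ℝⁿ, ⟨u, f̂(t,u)⟩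 + (1/2)·|ĝ(t,u)|²_F ≤ k₁·(1 + ‖u‖²). -/

import Mathlib

/-- The Frobenius norm of a real matrix. -/
noncomputable def frobNorm {k l : Type*} [Fintype k] [Fintype l]
    (B : Matrix k l ℝ) : ℝ :=
  Real.sqrt (∑ i, ∑ j, (B i j) ^ 2)

lemma frobNorm_nonneg {k l : Type*} [Fintype k] [Fintype l] (B : Matrix k l ℝ) :
    0 ≤ frobNorm B := Real.sqrt_nonneg _

lemma norm_toEuclideanLin_le {n l : ℕ} (B : Matrix (Fin n) (Fin l) ℝ)
    (x : EuclideanSpace ℝ (Fin l)) :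
    ‖Matrix.toEuclideanLin B x‖ ≤ frobNorm B * ‖x‖ := by
  have hx : ‖x‖ = Real.sqrt (∑ j, (x j) ^ 2) := by
    rw [EuclideanSpace.norm_eq]
    congr 1; apply Finset.sum_congr rfl; intro j _; rw [Real.norm_eq_abs, sq_abs]
  have hy : ‖Matrix.toEuclideanLin B x‖ = Real.sqrt (∑ i, (∑ j, B i j * x j) ^ 2) := by
    rw [EuclideanSpace.norm_eq]
    congr 1; apply Finset.sum_congr rfl; intro i _
    rw [Real.norm_eq_abs, sq_abs]
    rfl
  rw [hx, hy, frobNorm, ← Real.sqrt_mul (by positivity)]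
  apply Real.sqrt_le_sqrt
  rw [Finset.sum_mul]
  apply Finset.sum_le_sum
  intro i _
  exact Finset.sum_mul_sq_le_sq_mul_sq _ _ _

lemma sde_arith (k CP Lv V₀ a b I1 I2 : ℝ) (hk : 0 < k) (hCP : 0 ≤ CP) (hLv : 0 ≤ Lv)
    (hV0 : 0 ≤ V₀) (ha : 0 ≤ a) (hb : 0 ≤ b) (hXb : b ≤ (1 + Lv) * a + V₀)
    (hI1 : I1 ≤ CP * (b * a)) (hI2 : I2 ≤ k * (1 + b ^ 2)) :
    I1 + I2 ≤ (CP * (1 + Lv) + CP * V₀ + k + 2 * k * (1 + Lv) ^ 2 + 2 * k * V₀ ^ 2 + 1)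
      * (1 + a ^ 2) := by
  have hbb : b * b ≤ ((1 + Lv) * a + V₀) * ((1 + Lv) * a + V₀) := mul_self_le_mul_self hb hXb
  have hb2 : b ^ 2 ≤ 2 * (1 + Lv) ^ 2 * a ^ 2 + 2 * V₀ ^ 2 := by
    nlinarith [sq_nonneg ((1 + Lv) * a - V₀)]
  have hba : b * a ≤ ((1 + Lv) * a + V₀) * a := mul_le_mul_of_nonneg_right hXb ha
  have h1 : CP * (b * a) ≤ CP * (((1 + Lv) * a + V₀) * a) := mul_le_mul_of_nonneg_left hba hCP
  have h2 : CP * V₀ * a ≤ CP * V₀ * (1 + a ^ 2) := by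
    nlinarith [mul_nonneg (mul_nonneg hCP hV0) (sq_nonneg (a - 1)),
      mul_nonneg (mul_nonneg hCP hV0) (sq_nonneg a), mul_nonneg hCP hV0]
  have hkb := mul_le_mul_of_nonneg_left hb2 hk.le
  nlinarith [mul_nonneg hCP hLv, sq_nonneg a, hk.le,
    mul_nonneg hk.le (sq_nonneg V₀), mul_nonneg (mul_nonneg hk.le (sq_nonneg V₀)) (sq_nonneg a),
    mul_nonneg hk.le (sq_nonneg (1 + Lv)),
    mul_nonneg (mul_nonneg hCP hLv) (sq_nonneg a), mul_nonneg hk.le hLv,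
    mul_nonneg (mul_nonneg hk.le hLv) (sq_nonneg a), mul_nonneg hk.le (sq_nonneg a)]

/-- If the SDAE coefficients satisfy the monotone condition
`⟨A⁻(t)A(t)X, A⁻(t)f(t,X)⟩ + (1/2)|A⁻(t)g(t,X)|²_F ≤ k(1 + ‖X‖²)`, then the coefficients
`f̂, ĝ` of the inherent regular SDE satisfy a monotone condition
`⟨u, f̂(t,u)⟩ + (1/2)|ĝ(t,u)|²_F ≤ k₁(1 + ‖u‖²)` for some constant `k₁ > 0`. -/
theorem inherent_sde_monotone
    (n m : ℕ) (hn : 0 < n) (hm : 0 < m) (T : ℝ) (hT : 0 < T) (k : ℝ) (hk : 0 < k)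
    (A Aminus P' : ℝ → Matrix (Fin n) (Fin n) ℝ)
    (CP : ℝ)
    (hP : ∀ t ∈ Set.Icc (0 : ℝ) T, frobNorm (P' t) ≤ CP)
    (f : ℝ → EuclideanSpace ℝ (Fin n) → EuclideanSpace ℝ (Fin n))
    (g : ℝ → EuclideanSpace ℝ (Fin n) → Matrix (Fin n) (Fin m) ℝ)
    (hmono : ∀ t ∈ Set.Icc (0 : ℝ) T, ∀ X : EuclideanSpace ℝ (Fin n),
      (inner ℝ (Matrix.toEuclideanLin (Aminus t * A t) X)
          (Matrix.toEuclideanLin (Aminus t) (f t X)) : ℝ)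
        + 1 / 2 * (frobNorm (Aminus t * g t X)) ^ 2 ≤ k * (1 + ‖X‖ ^ 2))
    (vhat : ℝ → EuclideanSpace ℝ (Fin n) → EuclideanSpace ℝ (Fin n))
    (Lv : ℝ) (hLv : 0 ≤ Lv)
    (hvhat : ∀ t ∈ Set.Icc (0 : ℝ) T, ∀ u₁ u₂ : EuclideanSpace ℝ (Fin n),
      ‖vhat t u₁ - vhat t u₂‖ ≤ Lv * ‖u₁ - u₂‖)
    (V₀ : ℝ)
    (hV₀ : ∀ t ∈ Set.Icc (0 : ℝ) T, ‖vhat t 0‖ ≤ V₀)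
    (hproj : ∀ t ∈ Set.Icc (0 : ℝ) T, ∀ u : EuclideanSpace ℝ (Fin n),
      Matrix.toEuclideanLin (Aminus t * A t) (u + vhat t u) = u) :
    ∃ k₁ : ℝ, 0 < k₁ ∧ ∀ t ∈ Set.Icc (0 : ℝ) T, ∀ u : EuclideanSpace ℝ (Fin n),
      (inner ℝ u (Matrix.toEuclideanLin (P' t) (u + vhat t u)
          + Matrix.toEuclideanLin (Aminus t) (f t (u + vhat t u))) : ℝ)
        + 1 / 2 * (frobNorm (Aminus t * g t (u + vhat t u))) ^ 2
        ≤ k₁ * (1 + ‖u‖ ^ 2) := by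
  have h0T : (0 : ℝ) ∈ Set.Icc (0 : ℝ) T := ⟨le_refl 0, hT.le⟩
  have hCP : 0 ≤ CP := le_trans (frobNorm_nonneg _) (hP 0 h0T)
  have hV₀0 : 0 ≤ V₀ := le_trans (norm_nonneg _) (hV₀ 0 h0T)
  refine ⟨CP * (1 + Lv) + CP * V₀ + k + 2 * k * (1 + Lv) ^ 2 + 2 * k * V₀ ^ 2 + 1,
    by positivity, ?_⟩
  intro t ht u
  set X := u + vhat t u with hX
  -- bound on ‖X‖
  have hvb : ‖vhat t u‖ ≤ Lv * ‖u‖ + V₀ := by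
    calc ‖vhat t u‖ ≤ ‖vhat t u - vhat t 0‖ + ‖vhat t 0‖ := by
          simpa using norm_add_le (vhat t u - vhat t 0) (vhat t 0)
      _ ≤ Lv * ‖u - 0‖ + V₀ := add_le_add (hvhat t ht u 0) (hV₀ t ht)
      _ = Lv * ‖u‖ + V₀ := by rw [sub_zero]
  have hXb : ‖X‖ ≤ (1 + Lv) * ‖u‖ + V₀ := by
    calc ‖X‖ ≤ ‖u‖ + ‖vhat t u‖ := norm_add_le _ _
      _ ≤ ‖u‖ + (Lv * ‖u‖ + V₀) := by linarith
      _ = (1 + Lv) * ‖u‖ + V₀ := by ring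
  -- the inner product with the P' term
  have hI1 : (inner ℝ u (Matrix.toEuclideanLin (P' t) X) : ℝ) ≤ CP * (‖X‖ * ‖u‖) := by
    calc (inner ℝ u (Matrix.toEuclideanLin (P' t) X) : ℝ)
        ≤ ‖u‖ * ‖Matrix.toEuclideanLin (P' t) X‖ := real_inner_le_norm _ _
      _ ≤ ‖u‖ * (frobNorm (P' t) * ‖X‖) := by
          apply mul_le_mul_of_nonneg_left (norm_toEuclideanLin_le _ _) (norm_nonneg _)
      _ ≤ ‖u‖ * (CP * ‖X‖) := by
          apply mul_le_mul_of_nonneg_left _ (norm_nonneg _)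
          exact mul_le_mul_of_nonneg_right (hP t ht) (norm_nonneg _)
      _ = CP * (‖X‖ * ‖u‖) := by ring
  -- the monotone condition at X, rewritten using the projector identity
  have hI2 : (inner ℝ u (Matrix.toEuclideanLin (Aminus t) (f t X)) : ℝ)
      + 1 / 2 * (frobNorm (Aminus t * g t X)) ^ 2 ≤ k * (1 + ‖X‖ ^ 2) := by
    have := hmono t ht X
    rwa [hproj t ht u] at this
  rw [inner_add_right, add_assoc]
  exact sde_arith k CP Lv V₀ ‖u‖ ‖X‖ _ _ hk hCP hLv hV₀0 (norm_nonneg _) (norm_nonneg _)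
    hXb hI1 hI2
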